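/- Fix α > 0, x_max ∈ (0,1), a strictly concave strictly increasing reward u, and a total time budget S > 0 for k ≥ 2 rest-work cycles each starting and ending at x_max. Among all choices of rest times r₁,...,r_k > 0 with Σᵢ f(rᵢ) = S (where f(r) = r + t(r) and t(r) = (1/α) ln((1 - x_max e^{-αr})/(1 - x_max))), the total reward Σᵢ u(t(rᵢ)) is maximized when all rᵢ are equal. -/

import Mathlib

open Real Set


lemma gconc (α xmax : ℝ) (hα : 0 < α) (h0 : 0 < xmax) (h1 : xmax < 1) :
    ConcaveOn ℝ univ (fun s : ℝ => -(1/α) * Real.log ((1-xmax) + xmax * Real.exp (-α*s))) := by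
  set c := 1 - xmax with hc
  have hcpos : 0 < c := by simp [hc]; linarith
  set den : ℝ → ℝ := fun s => c + xmax * Real.exp (-α*s) with hden
  have hdenpos : ∀ s, 0 < den s := fun s => by
    have := Real.exp_pos (-α*s); positivity
  set N : ℝ → ℝ := fun s => xmax * Real.exp (-α*s) with hN
  set N' : ℝ → ℝ := fun s => xmax * (Real.exp (-α*s) * (-α)) with hN'
  have hNd : ∀ s, HasDerivAt N (N' s) s := by
    intro s
    have h1 : HasDerivAt (fun s : ℝ => -α*s) (-α) s := by
      simpa using (hasDerivAt_id s).const_mul (-α)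
    exact (h1.exp).const_mul xmax
  have hdend : ∀ s, HasDerivAt den (N' s) s := fun s => (hNd s).const_add c
  have hg' : ∀ s, HasDerivAt (fun s : ℝ => -(1/α) * Real.log (den s)) (N s / den s) s := by
    intro s
    have hl : HasDerivAt (fun s : ℝ => Real.log (den s)) (N' s / den s) s :=
      (hdend s).log (hdenpos s).ne'
    have := hl.const_mul (-(1/α))
    convert this using 1
    · rfl
    · rfl
    rw [hN, hN']
    field_simp
  have hg'' : ∀ s, HasDerivAt (fun s : ℝ => N s / den s)
      ((N' s * den s - N s * N' s) / den s ^ 2) s := fun s =>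
    (hNd s).div (hdend s) (hdenpos s).ne'
  apply concaveOn_of_hasDerivWithinAt2_nonpos convex_univ
    (f' := fun s => N s / den s)
    (f'' := fun s => (N' s * den s - N s * N' s) / den s ^ 2)
  · exact fun x _ => ((hg' x).continuousAt).continuousWithinAt
  · intro x _; exact (hg' x).hasDerivWithinAt
  · intro x _; exact (hg'' x).hasDerivWithinAt
  · intro x _
    have he := Real.exp_pos (-α*x)
    have hnum : N' x * den x - N x * N' x = -(α * c * (xmax * Real.exp (-α*x))) := by
      simp only [hN, hN', hden]; ring
    rw [hnum]
    have : 0 < α * c * (xmax * Real.exp (-α*x)) := by positivity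
    have h2 : (0:ℝ) < den x ^ 2 := by positivity
    exact div_nonpos_of_nonpos_of_nonneg (by linarith) (le_of_lt h2)

lemma tw_eq_g (α xmax : ℝ) (hα : 0 < α) (h0 : 0 < xmax) (h1 : xmax < 1)
    (tw : ℝ → ℝ)
    (htw : ∀ r : ℝ, tw r = (1 / α) * Real.log ((1 - xmax * Real.exp (-α * r)) / (1 - xmax)))
    (f : ℝ → ℝ) (hf : ∀ r : ℝ, f r = r + tw r)
    (r : ℝ) (hr : 0 < r) :
    tw r = -(1/α) * Real.log ((1-xmax) + xmax * Real.exp (-α * f r)) := by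
  set c := 1 - xmax with hc
  have hcpos : 0 < c := by simp [hc]; linarith
  set E := Real.exp (-α * r) with hE
  have hE1 : E < 1 := by
    rw [hE]; apply Real.exp_lt_one_iff.mpr; nlinarith
  have hEpos : 0 < E := Real.exp_pos _
  set A := 1 - xmax * E with hA
  have hApos : 0 < A := by nlinarith
  have hexp_tw : Real.exp (-α * tw r) = c / A := by
    rw [htw r]
    have hlog : Real.log (c/A) = - Real.log (A/c) := by
      rw [show c/A = (A/c)⁻¹ by rw [inv_div], Real.log_inv]
    have : -α * ((1/α) * Real.log (A / c)) = Real.log (c / A) := by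
      rw [hlog]; field_simp
    rw [show -α * ((1/α) * Real.log ((1 - xmax * Real.exp (-α*r)) / (1-xmax))) = -α * ((1/α) * Real.log (A/c)) by rw [← hE, ← hA, ← hc], this]
    exact Real.exp_log (by positivity)
  have hexp_f : Real.exp (-α * f r) = E * (c / A) := by
    rw [hf r, show -α * (r + tw r) = (-α * r) + (-α * tw r) by ring, Real.exp_add, hexp_tw, hE]
  rw [hexp_f]
  have hkey : c + xmax * (E * (c / A)) = c / A := by
    field_simp
    nlinarith [hA]
  rw [hkey, htw r, ← hE, ← hA]
  rw [show Real.log (c/A) = - Real.log (A/c) by rw [show c/A = (A/c)⁻¹ by rw [inv_div], Real.log_inv]]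
  ring

lemma tw_nonneg (α xmax : ℝ) (hα : 0 < α) (h0 : 0 < xmax) (h1 : xmax < 1)
    (tw : ℝ → ℝ)
    (htw : ∀ r : ℝ, tw r = (1 / α) * Real.log ((1 - xmax * Real.exp (-α * r)) / (1 - xmax)))
    (r : ℝ) (hr : 0 < r) : 0 ≤ tw r := by
  rw [htw r]
  have hE1 : Real.exp (-α * r) < 1 := Real.exp_lt_one_iff.mpr (by nlinarith)
  have hEpos : (0:ℝ) < Real.exp (-α * r) := Real.exp_pos _
  have hc : (0:ℝ) < 1 - xmax := by linarith
  have h1le : (1:ℝ) ≤ (1 - xmax * Real.exp (-α * r)) / (1 - xmax) := by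
    rw [le_div_iff₀ hc]; nlinarith
  have := Real.log_nonneg h1le
  positivity

theorem equal_cycles_optimal
    (α xmax S : ℝ) (k : ℕ) (hα : 0 < α) (h0 : 0 < xmax) (h1 : xmax < 1)
    (hS : 0 < S) (hk : 2 ≤ k)
    (u : ℝ → ℝ) (hconc : StrictConcaveOn ℝ (Set.Ici 0) u)
    (hmono : StrictMonoOn u (Set.Ici 0))
    (tw : ℝ → ℝ)
    (htw : ∀ r : ℝ, tw r = (1 / α) * Real.log ((1 - xmax * Real.exp (-α * r)) / (1 - xmax)))
    (f : ℝ → ℝ) (hf : ∀ r : ℝ, f r = r + tw r)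
    (r : Fin k → ℝ) (hr : ∀ i, 0 < r i) (hsum : ∑ i, f (r i) = S)
    (ρ : ℝ) (hρ : 0 < ρ) (hρsum : (k : ℝ) * f ρ = S) :
    ∑ i, u (tw (r i)) ≤ (k : ℝ) * u (tw ρ) := by
  have hk0 : (0:ℝ) < (k:ℝ) := by positivity
  set g : ℝ → ℝ := fun s => -(1/α) * Real.log ((1-xmax) + xmax * Real.exp (-α*s)) with hg
  have hgconc : ConcaveOn ℝ univ g := gconc α xmax hα h0 h1
  have hid : ∀ i, tw (r i) = g (f (r i)) := fun i =>
    tw_eq_g α xmax hα h0 h1 tw htw f hf (r i) (hr i)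
  have hidρ : tw ρ = g (f ρ) := tw_eq_g α xmax hα h0 h1 tw htw f hf ρ hρ
  have htwnn : ∀ i, 0 ≤ tw (r i) := fun i => tw_nonneg α xmax hα h0 h1 tw htw (r i) (hr i)
  have htwρnn : 0 ≤ tw ρ := tw_nonneg α xmax hα h0 h1 tw htw ρ hρ
  have hw : ∀ i ∈ Finset.univ (α := Fin k), (0:ℝ) ≤ 1/(k:ℝ) := fun _ _ => by positivity
  have hw1 : ∑ _i : Fin k, (1/(k:ℝ)) = 1 := by
    simp [Finset.sum_const, Finset.card_univ]
    field_simp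
  -- Step 1: average of tw (r i) is ≤ tw ρ, by concavity of g
  have step1 : ∑ i, (1/(k:ℝ)) • tw (r i) ≤ tw ρ := by
    have hJ := hgconc.le_map_sum (w := fun _ => 1/(k:ℝ)) (p := fun i => f (r i))
      hw hw1 (fun i _ => mem_univ _)
    have hsum2 : ∑ i, (1/(k:ℝ)) • f (r i) = f ρ := by
      simp only [smul_eq_mul, ← Finset.mul_sum, hsum]
      field_simp [ne_of_gt hk0]
      linarith [hρsum]
    rw [hsum2] at hJ
    calc ∑ i, (1/(k:ℝ)) • tw (r i) = ∑ i, (1/(k:ℝ)) • g (f (r i)) := by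
          simp only [hid]
      _ ≤ g (f ρ) := hJ
      _ = tw ρ := hidρ.symm
  -- Step 2: Jensen for u
  have step2 : ∑ i, (1/(k:ℝ)) • u (tw (r i)) ≤ u (∑ i, (1/(k:ℝ)) • tw (r i)) :=
    hconc.concaveOn.le_map_sum hw hw1 (fun i _ => htwnn i)
  -- Step 3: monotonicity of u
  have havgnn : 0 ≤ ∑ i, (1/(k:ℝ)) • tw (r i) :=
    Finset.sum_nonneg fun i _ => by
      have := htwnn i; simp only [smul_eq_mul]; positivity
  have step3 : u (∑ i, (1/(k:ℝ)) • tw (r i)) ≤ u (tw ρ) :=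
    hmono.monotoneOn havgnn htwρnn step1
  have final : ∑ i, (1/(k:ℝ)) • u (tw (r i)) ≤ u (tw ρ) := le_trans step2 step3
  have : (k:ℝ) * ∑ i, (1/(k:ℝ)) • u (tw (r i)) ≤ (k:ℝ) * u (tw ρ) :=
    mul_le_mul_of_nonneg_left final (le_of_lt hk0)
  calc ∑ i, u (tw (r i)) = (k:ℝ) * ∑ i, (1/(k:ℝ)) • u (tw (r i)) := by
        simp only [smul_eq_mul, ← Finset.mul_sum]
        field_simp
    _ ≤ (k:ℝ) * u (tw ρ) := this
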